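/- Let ν be a bivariate copula with CDF C, and let μ₁, μ₂ be probability measures on ℝ with CDFs F₁, F₂. Let T : [0,1]² → ℝ² be the map T(u,v) = (F₁⁻¹(u), F₂⁻¹(v)), where F_i⁻¹ is the generalized inverse of F_i. Then the pushforward measure μ = T_*ν is a probability measure on ℝ² satisfying μ((-∞,x] × (-∞,y]) = C(F₁(x), F₂(y)) for all x, y ∈ ℝ, and the two coordinate marginals of μ are μ₁ and μ₂. -/

import Mathlib

open MeasureTheory Set ProbabilityTheory Filter Topology

lemma sklar_bddBelow (μ : Measure ℝ) [IsProbabilityMeasure μ] {u : ℝ} (hu0 : 0 < u) :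
    BddBelow {x : ℝ | u ≤ cdf μ x} := by
  obtain ⟨x₀, hx₀⟩ := ((tendsto_cdf_atBot μ).eventually (eventually_lt_nhds hu0)).exists
  refine ⟨x₀, fun s hs => le_of_not_gt fun hlt => ?_⟩
  exact absurd (hs.trans (monotone_cdf μ hlt.le)) (not_le.2 hx₀)

lemma sklar_nonempty (μ : Measure ℝ) {u : ℝ} (hu1 : u < 1) :
    {x : ℝ | u ≤ cdf μ x}.Nonempty := by
  obtain ⟨x, hx⟩ := ((tendsto_cdf_atTop μ).eventually (eventually_gt_nhds hu1)).exists
  exact ⟨x, hx.le⟩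

lemma sklar_mem (μ : Measure ℝ) [IsProbabilityMeasure μ] {u : ℝ} (hu0 : 0 < u) (hu1 : u < 1) :
    u ≤ cdf μ (sInf {x : ℝ | u ≤ cdf μ x}) := by
  have hne := sklar_nonempty μ hu1
  have hbdd := sklar_bddBelow μ hu0
  have key : ∀ᶠ y in 𝓝[>] (sInf {x : ℝ | u ≤ cdf μ x}), u ≤ cdf μ y := by
    refine eventually_nhdsWithin_of_forall fun y hy => ?_
    obtain ⟨s, hsS, hsy⟩ := exists_lt_of_csInf_lt hne hy
    exact hsS.trans (monotone_cdf μ hsy.le)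
  exact ge_of_tendsto
    (((cdf μ).right_continuous _).mono_left (nhdsWithin_mono _ Ioi_subset_Ici_self)) key

lemma sklar_iff (μ : Measure ℝ) [IsProbabilityMeasure μ] {u : ℝ} (hu0 : 0 < u) (hu1 : u < 1)
    (x : ℝ) : sInf {y : ℝ | u ≤ cdf μ y} ≤ x ↔ u ≤ cdf μ x :=
  ⟨fun h => (sklar_mem μ hu0 hu1).trans (monotone_cdf μ h),
   fun h => csInf_le (sklar_bddBelow μ hu0) h⟩

lemma sklar_measurable (μ : Measure ℝ) [IsProbabilityMeasure μ]
    (Finv : ℝ → ℝ) (h : ∀ u, Finv u = sInf {x : ℝ | u ≤ cdf μ x}) :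
    Measurable Finv := by
  apply measurable_of_Iic
  intro x
  have h0 : ∀ u : ℝ, u ≤ 0 → Finv u = 0 := by
    intro u hu
    rw [h]
    have huniv : {x : ℝ | u ≤ cdf μ x} = univ :=
      eq_univ_of_forall fun y => hu.trans (cdf_nonneg μ y)
    rw [huniv]
    exact Real.sInf_of_not_bddBelow not_bddBelow_univ
  have h2 : ∀ u : ℝ, 1 < u → Finv u = 0 := by
    intro u hu
    rw [h]
    have hemp : {x : ℝ | u ≤ cdf μ x} = ∅ :=
      eq_empty_of_forall_notMem fun y hy => absurd hy (not_le.2 ((cdf_le_one μ y).trans_lt hu))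
    rw [hemp, Real.sInf_empty]
  have hdecomp : Finv ⁻¹' Iic x =
      ((Iic (cdf μ x) ∩ Ioo 0 1) ∪ ((Iic 0 ∪ Ioi 1) ∩ {_u : ℝ | (0:ℝ) ≤ x})) ∪
        ({1} ∩ {_u : ℝ | Finv 1 ≤ x}) := by
    ext u
    simp only [mem_preimage, mem_Iic, mem_union, mem_inter_iff, mem_Ioo, mem_setOf_eq,
      mem_singleton_iff, mem_Ioi]
    constructor
    · intro hu
      rcases le_or_gt u 0 with h' | h'
      · exact Or.inl (Or.inr ⟨Or.inl h', (h0 u h') ▸ hu⟩)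
      · rcases lt_trichotomy u 1 with h'' | h'' | h''
        · exact Or.inl (Or.inl ⟨(sklar_iff μ h' h'' x).1 ((h u) ▸ hu), h', h''⟩)
        · exact Or.inr ⟨h'', h'' ▸ hu⟩
        · exact Or.inl (Or.inr ⟨Or.inr h'', (h2 u h'') ▸ hu⟩)
    · rintro ((⟨h1, hu0, hu1⟩ | ⟨h1 | h1, hx⟩) | ⟨h1, hx⟩)
      · rw [h]; exact (sklar_iff μ hu0 hu1 x).2 h1
      · rw [h0 u h1]; exact hx
      · rw [h2 u h1]; exact hx
      · rw [h1]; exact hx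
  rw [hdecomp]
  exact (((measurableSet_Iic.inter measurableSet_Ioo).union
      ((measurableSet_Iic.union measurableSet_Ioi).inter (MeasurableSet.const _))).union
      ((measurableSet_singleton 1).inter (MeasurableSet.const _)))

lemma sklar_map (μ : Measure ℝ) [IsProbabilityMeasure μ]
    (Finv : ℝ → ℝ) (h : ∀ u, Finv u = sInf {x : ℝ | u ≤ cdf μ x}) :
    (volume.restrict (Icc (0:ℝ) 1)).map Finv = μ := by
  have hm := sklar_measurable μ Finv h
  haveI : IsProbabilityMeasure (volume.restrict (Icc (0:ℝ) 1)) :=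
    ⟨by simp [Real.volume_Icc]⟩
  haveI : IsProbabilityMeasure ((volume.restrict (Icc (0:ℝ) 1)).map Finv) :=
    Measure.isProbabilityMeasure_map hm.aemeasurable
  refine Measure.ext_of_Iic _ _ fun x => ?_
  rw [Measure.map_apply hm measurableSet_Iic,
    Measure.restrict_congr_set Ioo_ae_eq_Icc.symm,
    Measure.restrict_apply (hm measurableSet_Iic)]
  have hset : Finv ⁻¹' Iic x ∩ Ioo 0 1 = Iic (cdf μ x) ∩ Ioo 0 1 := by
    ext u
    simp only [mem_inter_iff, mem_preimage, mem_Iic, mem_Ioo, and_congr_left_iff, and_imp]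
    intro hu0 hu1
    rw [h]
    exact sklar_iff μ hu0 hu1 x
  rw [hset]
  have h1 : cdf μ x ≤ 1 := cdf_le_one μ x
  have hvol : volume (Iic (cdf μ x) ∩ Ioo 0 1) = ENNReal.ofReal (cdf μ x) := by
    apply le_antisymm
    · calc volume (Iic (cdf μ x) ∩ Ioo 0 1) ≤ volume (Ioc 0 (cdf μ x)) :=
            measure_mono fun u hu => ⟨hu.2.1, hu.1⟩
        _ = ENNReal.ofReal (cdf μ x) := by rw [Real.volume_Ioc, sub_zero]
    · calc ENNReal.ofReal (cdf μ x) = volume (Ioo 0 (cdf μ x)) := by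
            rw [Real.volume_Ioo, sub_zero]
        _ ≤ volume (Iic (cdf μ x) ∩ Ioo 0 1) :=
            measure_mono fun u hu => ⟨hu.2.le, hu.1, lt_of_lt_of_le hu.2 h1⟩
  rw [hvol, ofReal_cdf]

/-- **Sklar construction from a copula and marginals.** -/
theorem copula_pushforward_sklar
    (ν : Measure (ℝ × ℝ)) [IsProbabilityMeasure ν]
    (hν₁ : ν.map Prod.fst = volume.restrict (Icc (0 : ℝ) 1))
    (hν₂ : ν.map Prod.snd = volume.restrict (Icc (0 : ℝ) 1))
    (C : ℝ → ℝ → ℝ)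
    (hC : ∀ u v : ℝ, C u v = (ν (Icc 0 u ×ˢ Icc 0 v)).toReal)
    (μ₁ μ₂ : Measure ℝ) [IsProbabilityMeasure μ₁] [IsProbabilityMeasure μ₂]
    (F₁ F₂ : ℝ → ℝ)
    (hF₁ : ∀ x : ℝ, F₁ x = (μ₁ (Iic x)).toReal)
    (hF₂ : ∀ x : ℝ, F₂ x = (μ₂ (Iic x)).toReal)
    (Finv₁ Finv₂ : ℝ → ℝ)
    (hFinv₁ : ∀ u : ℝ, Finv₁ u = sInf {x : ℝ | u ≤ F₁ x})
    (hFinv₂ : ∀ u : ℝ, Finv₂ u = sInf {x : ℝ | u ≤ F₂ x}) :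
    IsProbabilityMeasure (ν.map (fun p : ℝ × ℝ => (Finv₁ p.1, Finv₂ p.2))) ∧
    (∀ x y : ℝ,
      ((ν.map (fun p : ℝ × ℝ => (Finv₁ p.1, Finv₂ p.2))) (Iic x ×ˢ Iic y)).toReal
        = C (F₁ x) (F₂ y)) ∧
    (ν.map (fun p : ℝ × ℝ => (Finv₁ p.1, Finv₂ p.2))).map Prod.fst = μ₁ ∧
    (ν.map (fun p : ℝ × ℝ => (Finv₁ p.1, Finv₂ p.2))).map Prod.snd = μ₂ := by
  have hF₁c : F₁ = cdf μ₁ := funext fun x => by rw [hF₁, cdf_eq_real, measureReal_def]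
  have hF₂c : F₂ = cdf μ₂ := funext fun x => by rw [hF₂, cdf_eq_real, measureReal_def]
  have hFi₁ : ∀ u : ℝ, Finv₁ u = sInf {x : ℝ | u ≤ cdf μ₁ x} := fun u => by
    rw [hFinv₁, hF₁c]
  have hFi₂ : ∀ u : ℝ, Finv₂ u = sInf {x : ℝ | u ≤ cdf μ₂ x} := fun u => by
    rw [hFinv₂, hF₂c]
  have hm₁ : Measurable Finv₁ := sklar_measurable μ₁ Finv₁ hFi₁
  have hm₂ : Measurable Finv₂ := sklar_measurable μ₂ Finv₂ hFi₂
  have hTm : Measurable (fun p : ℝ × ℝ => (Finv₁ p.1, Finv₂ p.2)) :=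
    (hm₁.comp measurable_fst).prodMk (hm₂.comp measurable_snd)
  haveI hP : IsProbabilityMeasure (ν.map (fun p : ℝ × ℝ => (Finv₁ p.1, Finv₂ p.2))) :=
    Measure.isProbabilityMeasure_map hTm.aemeasurable
  -- the complement of (0,1)² is ν-null
  have hedge : ∀ (f : ℝ × ℝ → ℝ), Measurable f → ν.map f = volume.restrict (Icc (0:ℝ) 1) →
      ν (f ⁻¹' (Ioo (0:ℝ) 1)ᶜ) = 0 := by
    intro f hf hmap
    rw [← Measure.map_apply hf measurableSet_Ioo.compl, hmap,
      Measure.restrict_apply measurableSet_Ioo.compl]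
    have : (Ioo (0:ℝ) 1)ᶜ ∩ Icc 0 1 = ({0, 1} : Set ℝ) := by
      ext u
      simp only [mem_inter_iff, mem_compl_iff, mem_Ioo, mem_Icc, mem_insert_iff,
        mem_singleton_iff, not_and, not_lt]
      constructor
      · rintro ⟨h1, h2, h3⟩
        rcases h2.eq_or_lt with h | h
        · exact Or.inl h.symm
        · exact Or.inr (le_antisymm h3 (h1 h))
      · rintro (rfl | rfl) <;> norm_num
    rw [this]
    exact (Set.to_countable _).measure_zero _
  have hnull : ∀ᵐ p ∂ν, p.1 ∈ Ioo (0:ℝ) 1 ∧ p.2 ∈ Ioo (0:ℝ) 1 := by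
    have hA : ∀ᵐ p : ℝ × ℝ ∂ν, p.1 ∈ Ioo (0:ℝ) 1 := by
      rw [ae_iff]
      exact hedge Prod.fst measurable_fst hν₁
    have hB : ∀ᵐ p : ℝ × ℝ ∂ν, p.2 ∈ Ioo (0:ℝ) 1 := by
      rw [ae_iff]
      exact hedge Prod.snd measurable_snd hν₂
    exact hA.and hB
  refine ⟨hP, fun x y => ?_, ?_, ?_⟩
  · have key : (ν.map (fun p : ℝ × ℝ => (Finv₁ p.1, Finv₂ p.2))) (Iic x ×ˢ Iic y)
        = ν (Icc 0 (F₁ x) ×ˢ Icc 0 (F₂ y)) := by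
      rw [Measure.map_apply hTm (measurableSet_Iic.prod measurableSet_Iic)]
      apply measure_congr
      rw [eventuallyEq_set]
      filter_upwards [hnull] with p hp
      simp only [mem_preimage, mem_prod, mem_Iic, mem_Icc]
      rw [hFi₁, hFi₂, hF₁c, hF₂c]
      constructor
      · rintro ⟨h1, h2⟩
        exact ⟨⟨hp.1.1.le, (sklar_iff μ₁ hp.1.1 hp.1.2 x).1 h1⟩,
          hp.2.1.le, (sklar_iff μ₂ hp.2.1 hp.2.2 y).1 h2⟩
      · rintro ⟨⟨_, h1⟩, _, h2⟩
        exact ⟨(sklar_iff μ₁ hp.1.1 hp.1.2 x).2 h1, (sklar_iff μ₂ hp.2.1 hp.2.2 y).2 h2⟩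
    rw [key, hC]
  · rw [Measure.map_map measurable_fst hTm]
    have hcomp : Prod.fst ∘ (fun p : ℝ × ℝ => (Finv₁ p.1, Finv₂ p.2)) = Finv₁ ∘ Prod.fst := rfl
    rw [hcomp, ← Measure.map_map hm₁ measurable_fst, hν₁]
    exact sklar_map μ₁ Finv₁ hFi₁
  · rw [Measure.map_map measurable_snd hTm]
    have hcomp : Prod.snd ∘ (fun p : ℝ × ℝ => (Finv₁ p.1, Finv₂ p.2)) = Finv₂ ∘ Prod.snd := rfl
    rw [hcomp, ← Measure.map_map hm₂ measurable_snd, hν₂]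
    exact sklar_map μ₂ Finv₂ hFi₂
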